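/- For any integer d ≥ 1, max over partitions of the worst-case height-2 editing cost equals ⌊d/2⌋ · ⌈d/2⌉; in particular with n = 2, p₁ = ⌈d/2⌉, p₂ = ⌊d/2⌋, l₁ = ⌊d/2⌋, l₂ = d, the quantity min_{x ∈ ℕ, A ⊆ {1,2}} [ Σ_{k∈A} p_k l_k + Σ_{k∉A} p_k |l_k − x| ] equals ⌊d/2⌋ · ⌈d/2⌉. -/

import Mathlib

open Finset in
/-- With two height-1 classes, `p₁ = ⌈d/2⌉`, `p₂ = ⌊d/2⌋`, `l₁ = ⌊d/2⌋`, `l₂ = d`,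
the minimum over `x ∈ ℕ` and `A ⊆ {1,2}` of
`∑_{k∈A} p_k l_k + ∑_{k∉A} p_k |l_k − x|` equals `⌊d/2⌋ · ⌈d/2⌉`. -/
theorem stmt_14 (d : ℕ) (hd : 1 ≤ d) :
    IsLeast
      {c : ℕ | ∃ x : ℕ, ∃ A : Finset (Fin 2),
        c = ∑ k ∈ A, ![(d + 1) / 2, d / 2] k * ![d / 2, d] k +
            ∑ k ∈ Aᶜ, ![(d + 1) / 2, d / 2] k * ((![d / 2, d] k : ℤ) - (x : ℤ)).natAbs}
      (d / 2 * ((d + 1) / 2)) := by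
  have c0 : ({0} : Finset (Fin 2))ᶜ = {1} := by decide
  have c1 : ({1} : Finset (Fin 2))ᶜ = {0} := by decide
  have ce : (∅ : Finset (Fin 2))ᶜ = {0, 1} := by decide
  have cf : ({0, 1} : Finset (Fin 2))ᶜ = ∅ := by decide
  have hne : (0 : Fin 2) ∉ ({1} : Finset (Fin 2)) := by decide
  constructor
  · exact ⟨d, {0}, by simp [c0, mul_comm]⟩
  · rintro c ⟨x, A, rfl⟩
    by_cases h0 : (0 : Fin 2) ∈ A <;> by_cases h1 : (1 : Fin 2) ∈ A
    · have hA : A = {0, 1} := by ext i; fin_cases i <;> simp [h0, h1]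
      simp only [hA, cf, Finset.sum_insert hne, Finset.sum_singleton, Finset.sum_empty,
        Matrix.cons_val_zero, Matrix.cons_val_one, Matrix.head_cons, add_zero]
      rw [mul_comm]
      exact Nat.le_add_right _ _
    · have hA : A = {0} := by ext i; fin_cases i <;> simp [h0, h1]
      simp only [hA, c0, Finset.sum_singleton,
        Matrix.cons_val_zero, Matrix.cons_val_one, Matrix.head_cons]
      rw [mul_comm]
      exact Nat.le_add_right _ _
    · have hA : A = {1} := by ext i; fin_cases i <;> simp [h0, h1]
      simp only [hA, c1, Finset.sum_singleton,
        Matrix.cons_val_zero, Matrix.cons_val_one, Matrix.head_cons]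
      exact le_trans (Nat.mul_le_mul_left _ (by omega)) (Nat.le_add_right _ _)
    · have hA : A = ∅ := by ext i; fin_cases i <;> simp [h0, h1]
      simp only [hA, ce, Finset.sum_empty, Finset.sum_insert hne, Finset.sum_singleton,
        Matrix.cons_val_zero, Matrix.cons_val_one, Matrix.head_cons, zero_add]
      have key : (d+1)/2 ≤ ((d/2 : ℤ) - x).natAbs + ((d : ℤ) - x).natAbs := by omega
      calc d / 2 * ((d + 1) / 2)
          ≤ d / 2 * (((d/2 : ℤ) - x).natAbs + ((d : ℤ) - x).natAbs) :=
            Nat.mul_le_mul_left _ key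
        _ = d / 2 * ((d/2 : ℤ) - x).natAbs + d / 2 * ((d : ℤ) - x).natAbs := by ring
        _ ≤ (d+1)/2 * ((d/2 : ℤ) - x).natAbs + d / 2 * ((d : ℤ) - x).natAbs :=
            Nat.add_le_add_right (Nat.mul_le_mul_right _ (by omega)) _
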